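/- For a ∈ (0, 1/2), the function m_a(φ) = (a 2^{a−1}/(√π |φ|^{1+2a})) Γ_L(1/2+a, φ²/2) + (a 2^{−a−1}/(√π |φ|^{1−2a})) Γ_U(1/2−a, φ²/2) satisfies m_a(φ) → ∞ as φ → 0 and |φ|^{1+2a} m_a(φ) → a 2^{a−1} Γ(1/2+a)/√π as |φ| → ∞. -/

import Mathlib

open Real MeasureTheory Filter

/-- Lower incomplete gamma function Γ_L(s,x) = ∫₀ˣ u^{s-1} e^{-u} du. -/
noncomputable def lowerGamma (s x : ℝ) : ℝ :=
  ∫ u in Set.Ioo (0:ℝ) x, u ^ (s - 1) * Real.exp (-u)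

/-- Upper incomplete gamma function Γ_U(s,x) = ∫ₓ^∞ u^{s-1} e^{-u} du. -/
noncomputable def upperGamma (s x : ℝ) : ℝ :=
  ∫ u in Set.Ioi x, u ^ (s - 1) * Real.exp (-u)

/-- The incomplete-gamma expression in the HTHS+ sandwich bounds. -/
noncomputable def mExpr (a φ : ℝ) : ℝ :=
  (a * 2 ^ (a - 1) / (Real.sqrt π * |φ| ^ (1 + 2*a))) * lowerGamma (1/2 + a) (φ^2 / 2)
    + (a * 2 ^ (-a - 1) / (Real.sqrt π * |φ| ^ (1 - 2*a))) * upperGamma (1/2 - a) (φ^2 / 2)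

open Set

lemma gammaIntegrand_integrableOn {s : ℝ} (hs : 0 < s) :
    IntegrableOn (fun u : ℝ => u ^ (s - 1) * Real.exp (-u)) (Ioi 0) :=
  (Real.GammaIntegral_convergent hs).congr_fun (fun u _ => mul_comm _ _) measurableSet_Ioi

lemma gammaIntegrand_nonneg {s u : ℝ} (hu : 0 ≤ u) :
    0 ≤ u ^ (s - 1) * Real.exp (-u) :=
  mul_nonneg (Real.rpow_nonneg hu _) (Real.exp_pos _).le

lemma lowerGamma_nonneg (s x : ℝ) : 0 ≤ lowerGamma s x :=
  setIntegral_nonneg measurableSet_Ioo (fun u hu => gammaIntegrand_nonneg hu.1.le)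

lemma upperGamma_nonneg (s : ℝ) {x : ℝ} (hx : 0 ≤ x) : 0 ≤ upperGamma s x :=
  setIntegral_nonneg measurableSet_Ioi (fun u hu => gammaIntegrand_nonneg (hx.trans (le_of_lt hu)))

lemma upperGamma_anti {s x y : ℝ} (hs : 0 < s) (hx : 0 < x) (hxy : x ≤ y) :
    upperGamma s y ≤ upperGamma s x := by
  refine setIntegral_mono_set
    ((gammaIntegrand_integrableOn hs).mono_set (Ioi_subset_Ioi hx.le))
    ((ae_restrict_iff' measurableSet_Ioi).2 (ae_of_all _ fun u hu =>
      gammaIntegrand_nonneg (hx.le.trans (le_of_lt hu))))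
    ((Ioi_subset_Ioi hxy).eventuallyLE)

lemma upperGamma_pos {s x : ℝ} (hs : 0 < s) (hx : 0 < x) : 0 < upperGamma s x := by
  have hfi := (gammaIntegrand_integrableOn hs).mono_set (Ioi_subset_Ioi hx.le)
  have hnn : 0 ≤ᵐ[volume.restrict (Ioi x)] fun u : ℝ => u ^ (s - 1) * Real.exp (-u) :=
    (ae_restrict_iff' measurableSet_Ioi).2 (ae_of_all _ fun u hu =>
      gammaIntegrand_nonneg (hx.le.trans (le_of_lt hu)))
  rw [upperGamma, setIntegral_pos_iff_support_of_nonneg_ae hnn hfi]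
  have hsub : Ioi x ⊆ Function.support (fun u : ℝ => u ^ (s - 1) * Real.exp (-u)) ∩ Ioi x :=
    fun u hu => ⟨ne_of_gt (mul_pos (Real.rpow_pos_of_pos (hx.trans hu) _) (Real.exp_pos _)), hu⟩
  refine lt_of_lt_of_le ?_ (measure_mono hsub)
  simp [Real.volume_Ioi]

lemma lowerGamma_tendsto {s : ℝ} (hs : 0 < s) :
    Tendsto (fun x => lowerGamma s x) atTop (nhds (Real.Gamma s)) := by
  have hG : Real.Gamma s = ∫ u in Ioi (0:ℝ), u ^ (s - 1) * Real.exp (-u) := by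
    rw [Real.Gamma_eq_integral hs]
    exact setIntegral_congr_fun measurableSet_Ioi (fun u _ => mul_comm _ _)
  rw [hG]
  have h := intervalIntegral_tendsto_integral_Ioi 0 (gammaIntegrand_integrableOn hs) tendsto_id
  refine h.congr' ?_
  filter_upwards [eventually_ge_atTop (0:ℝ)] with x hx
  simp only [id_eq]
  rw [intervalIntegral.integral_of_le hx, integral_Ioc_eq_integral_Ioo]
  rfl

lemma upperGamma_le_exp {s x : ℝ} (hs0 : 0 < s) (hs : s ≤ 1) (hx : 1 ≤ x) :
    upperGamma s x ≤ Real.exp (-x) := by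
  have hx0 : (0:ℝ) < x := lt_of_lt_of_le one_pos hx
  have h1 : upperGamma s x ≤ ∫ u in Ioi x, Real.exp (-u) := by
    refine setIntegral_mono_on
      ((gammaIntegrand_integrableOn hs0).mono_set (Ioi_subset_Ioi hx0.le))
      ?_ measurableSet_Ioi ?_
    · simpa using exp_neg_integrableOn_Ioi x one_pos
    · intro u hu
      have hu1 : (1:ℝ) ≤ u := hx.trans (le_of_lt hu)
      calc u ^ (s - 1) * Real.exp (-u) ≤ 1 * Real.exp (-u) :=
            mul_le_mul_of_nonneg_right
              (Real.rpow_le_one_of_one_le_of_nonpos hu1 (by linarith)) (Real.exp_pos _).le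
        _ = Real.exp (-u) := one_mul _
  rwa [integral_exp_neg_Ioi] at h1

/-- m_a has a spike at the origin and polynomial tails of order |φ|^{-(1+2a)}. -/
theorem mExpr_spike_and_tail (a : ℝ) (ha : a ∈ Set.Ioo (0:ℝ) (1/2)) :
    Filter.Tendsto (fun φ : ℝ => mExpr a φ) (nhdsWithin 0 {(0:ℝ)}ᶜ) Filter.atTop ∧
    Filter.Tendsto (fun φ : ℝ => |φ| ^ (1 + 2*a) * mExpr a φ) (Filter.cocompact ℝ)
      (nhds (a * 2 ^ (a - 1) * Real.Gamma (1/2 + a) / Real.sqrt π)) := by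
  obtain ⟨ha0, ha2⟩ := ha
  have hs : (0:ℝ) < 1/2 + a := by linarith
  have hs' : (0:ℝ) < 1/2 - a := by linarith
  have hπ : (0:ℝ) < Real.sqrt π := Real.sqrt_pos.2 Real.pi_pos
  constructor
  · -- spike at origin
    set B : ℝ := a * 2 ^ (-a - 1) / Real.sqrt π with hBdef
    have hB : 0 < B := by
      apply div_pos _ hπ
      exact mul_pos ha0 (Real.rpow_pos_of_pos two_pos _)
    have hc : 0 < upperGamma (1/2 - a) (1/2) := upperGamma_pos hs' one_half_pos
    -- tendsto of the lower-bounding function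
    have habs : Tendsto (fun φ : ℝ => |φ|) (nhdsWithin 0 {(0:ℝ)}ᶜ) (nhdsWithin 0 (Ioi 0)) := by
      refine tendsto_nhdsWithin_of_tendsto_nhds_of_eventually_within _ ?_ ?_
      · have := (continuous_abs.tendsto (0:ℝ))
        simpa using this.mono_left nhdsWithin_le_nhds
      · filter_upwards [self_mem_nhdsWithin] with φ hφ
        exact abs_pos.2 hφ
    have hbound : Tendsto (fun φ : ℝ => B * upperGamma (1/2 - a) (1/2) * (|φ| ^ (1 - 2*a))⁻¹)
        (nhdsWithin 0 {(0:ℝ)}ᶜ) atTop := by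
      have h1 : Tendsto (fun φ : ℝ => (|φ|⁻¹) ^ (1 - 2*a)) (nhdsWithin 0 {(0:ℝ)}ᶜ) atTop :=
        (tendsto_rpow_atTop (by linarith)).comp (tendsto_inv_nhdsGT_zero.comp habs)
      have h2 : Tendsto (fun φ : ℝ => (|φ| ^ (1 - 2*a))⁻¹) (nhdsWithin 0 {(0:ℝ)}ᶜ) atTop := by
        refine h1.congr fun φ => ?_
        rw [← Real.inv_rpow (abs_nonneg φ)]
      exact h2.const_mul_atTop (mul_pos hB hc)
    refine tendsto_atTop_mono' _ ?_ hbound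
    have h01 : ∀ᶠ φ : ℝ in nhdsWithin 0 {(0:ℝ)}ᶜ, |φ| ≤ 1 := by
      have : ∀ᶠ φ : ℝ in nhds (0:ℝ), |φ| ≤ 1 := by
        have : Tendsto (fun φ : ℝ => |φ|) (nhds 0) (nhds 0) := by
          simpa using continuous_abs.tendsto (0:ℝ)
        exact this.eventually_le_const one_pos
      exact this.filter_mono nhdsWithin_le_nhds
    filter_upwards [self_mem_nhdsWithin, h01] with φ hφ0 hφ1
    have hne : φ ≠ 0 := hφ0
    have habs0 : 0 < |φ| := abs_pos.2 hφ0
    have hsq : 0 < φ^2 / 2 := by positivity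
    have hsqle : φ^2 / 2 ≤ 1/2 := by
      have : φ^2 ≤ 1 := by
        have := sq_abs φ
        nlinarith [abs_nonneg φ]
      linarith
    have hU : upperGamma (1/2 - a) (1/2) ≤ upperGamma (1/2 - a) (φ^2 / 2) :=
      upperGamma_anti hs' hsq hsqle
    have hterm1 : 0 ≤ (a * 2 ^ (a - 1) / (Real.sqrt π * |φ| ^ (1 + 2*a)))
        * lowerGamma (1/2 + a) (φ^2 / 2) := by
      apply mul_nonneg _ (lowerGamma_nonneg _ _)
      apply div_nonneg (mul_nonneg ha0.le (Real.rpow_pos_of_pos two_pos _).le)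
      exact mul_nonneg hπ.le (Real.rpow_nonneg (abs_nonneg φ) _)
    have hcoef : B * (|φ| ^ (1 - 2*a))⁻¹
        = a * 2 ^ (-a - 1) / (Real.sqrt π * |φ| ^ (1 - 2*a)) := by
      rw [hBdef]; field_simp
    have hcoefpos : 0 < a * 2 ^ (-a - 1) / (Real.sqrt π * |φ| ^ (1 - 2*a)) := by
      apply div_pos (mul_pos ha0 (Real.rpow_pos_of_pos two_pos _))
      exact mul_pos hπ (Real.rpow_pos_of_pos habs0 _)
    calc B * upperGamma (1/2 - a) (1/2) * (|φ| ^ (1 - 2*a))⁻¹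
        = (a * 2 ^ (-a - 1) / (Real.sqrt π * |φ| ^ (1 - 2*a))) * upperGamma (1/2 - a) (1/2) := by
          rw [← hcoef]; ring
      _ ≤ (a * 2 ^ (-a - 1) / (Real.sqrt π * |φ| ^ (1 - 2*a))) * upperGamma (1/2 - a) (φ^2/2) :=
          mul_le_mul_of_nonneg_left hU hcoefpos.le
      _ ≤ mExpr a φ := by
          rw [mExpr]; linarith [hterm1]
  · -- polynomial tail
    set A : ℝ := a * 2 ^ (a - 1) / Real.sqrt π with hAdef
    set B : ℝ := a * 2 ^ (-a - 1) / Real.sqrt π with hBdef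
    -- tail of upper gamma term
    have hTail : Tendsto (fun t : ℝ => t ^ (4*a) * upperGamma (1/2 - a) (t^2/2)) atTop
        (nhds 0) := by
      have hmaj : Tendsto (fun t : ℝ => t ^ (4*a) * Real.exp (-(t^2/2))) atTop (nhds 0) := by
        have h0 := tendsto_rpow_mul_exp_neg_mul_atTop_nhds_zero (2*a) (1/2) one_half_pos
        have hsq : Tendsto (fun t : ℝ => t^2) atTop atTop := by
          simpa using tendsto_pow_atTop (two_ne_zero)
        have := h0.comp hsq
        refine this.congr' ?_
        filter_upwards [eventually_gt_atTop (0:ℝ)] with t ht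
        have h1 : (t^2 : ℝ) ^ (2*a) = t ^ (4*a) := by
          rw [← Real.rpow_natCast t 2, ← Real.rpow_mul ht.le]
          norm_num
          ring_nf
        simp only [Function.comp_apply]
        rw [h1]
        ring_nf
      refine squeeze_zero' ?_ ?_ hmaj
      · filter_upwards [eventually_gt_atTop (0:ℝ)] with t ht
        exact mul_nonneg (Real.rpow_nonneg ht.le _) (upperGamma_nonneg _ (by positivity))
      · filter_upwards [eventually_ge_atTop (2:ℝ)] with t ht
        have ht0 : (0:ℝ) < t := lt_of_lt_of_le two_pos ht
        have h1 : (1:ℝ) ≤ t^2/2 := by nlinarith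
        exact mul_le_mul_of_nonneg_left (upperGamma_le_exp hs' (by linarith) h1)
          (Real.rpow_nonneg ht0.le _)
    have hL : Tendsto (fun t : ℝ => lowerGamma (1/2 + a) (t^2/2)) atTop
        (nhds (Real.Gamma (1/2 + a))) := by
      have hsq : Tendsto (fun t : ℝ => t^2/2) atTop atTop := by
        apply Tendsto.atTop_div_const two_pos
        simpa using tendsto_pow_atTop (two_ne_zero)
      exact (lowerGamma_tendsto hs).comp hsq
    have hg : Tendsto (fun t : ℝ => A * lowerGamma (1/2 + a) (t^2/2)
        + B * (t ^ (4*a) * upperGamma (1/2 - a) (t^2/2))) atTop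
        (nhds (A * Real.Gamma (1/2 + a) + B * 0)) :=
      (hL.const_mul A).add (hTail.const_mul B)
    have habs : Tendsto (fun φ : ℝ => |φ|) (cocompact ℝ) atTop := by
      exact (tendsto_norm_cocompact_atTop (E := ℝ)).congr (fun x => Real.norm_eq_abs x)
    have hcomp := hg.comp habs
    have hlim : A * Real.Gamma (1/2 + a) + B * 0
        = a * 2 ^ (a - 1) * Real.Gamma (1/2 + a) / Real.sqrt π := by
      rw [hAdef]; ring
    rw [hlim] at hcomp
    refine hcomp.congr' ?_
    filter_upwards [habs.eventually_ge_atTop 1] with φ hφ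
    have ht0 : (0:ℝ) < |φ| := lt_of_lt_of_le one_pos hφ
    have h1 : |φ| ^ (1 + 2*a) ≠ 0 := (Real.rpow_pos_of_pos ht0 _).ne'
    have h2 : |φ| ^ (1 - 2*a) ≠ 0 := (Real.rpow_pos_of_pos ht0 _).ne'
    have hsplit : |φ| ^ (1 + 2*a) = |φ| ^ (1 - 2*a) * |φ| ^ (4*a) := by
      rw [← Real.rpow_add ht0]; ring_nf
    have hsq : φ^2 = |φ|^2 := (sq_abs φ).symm
    simp only [Function.comp_apply, mExpr, hsq]
    rw [hAdef, hBdef]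
    field_simp
    rw [show |φ| ^ (1 + a*2) = |φ| ^ (1 - a*2) * |φ| ^ (a*4) by rw [← Real.rpow_add ht0]; ring_nf]
    ring
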